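/- Let A, B : I^n → I be semicopulas with A ≤ B and fix an integer k with 1 ≤ k ≤ n. If B is continuous, then P⁻_k^{(A,B)}(x) ≤ B(x) − A(x) for all x ∈ I^n. If A is continuous, then P⁺_k^{(A,B)}(x) ≤ B(x) − A(x) for all x ∈ I^n. -/

import Mathlib

open scoped Classical BigOperators

namespace KIncr

/-- Points of the ambient space `ℝ^n`. -/
abbrev Pt (n : ℕ) := Fin n → ℝ

/-- Membership in the unit cube `I^n = [0,1]^n`. -/
def inCube {n : ℕ} (x : Pt n) : Prop := ∀ i, x i ∈ Set.Icc (0:ℝ) 1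

/-- The unit cube as a set. -/
def cubeSet (n : ℕ) : Set (Pt n) := {x | inCube x}

/-- Vertices of the unit cube `I^n`. -/
def isCubeVertex {n : ℕ} (x : Pt n) : Prop := ∀ i, x i = 0 ∨ x i = 1

/-- A (formal) box, given by its lower-left and upper-right corners. -/
structure Box (n : ℕ) where
  lo : Pt n
  hi : Pt n

/-- `R` is a `k`-box in `I^n`: exactly `k` coordinates are nondegenerate. -/
def Box.IsKBox {n : ℕ} (k : ℕ) (R : Box n) : Prop :=
  inCube R.lo ∧ inCube R.hi ∧ (∀ i, R.lo i ≤ R.hi i) ∧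
    (Finset.univ.filter (fun i => R.lo i < R.hi i)).card = k

/-- `v` is a vertex of the box `R`. -/
def Box.IsVertex {n : ℕ} (R : Box n) (v : Pt n) : Prop :=
  ∀ i, v i = R.lo i ∨ v i = R.hi i

/-- The (finite) set of vertices of a box. -/
noncomputable def Box.vertices {n : ℕ} (R : Box n) : Finset (Pt n) :=
  Finset.image (fun ε : Fin n → Bool => fun i => if ε i then R.hi i else R.lo i)
    Finset.univ

/-- The sign `(-1)^(m-(n-k))` of a vertex `v` of a `k`-box, where
`m = #{i : v i = lo i}`;  since `m ≥ n - k`, this equals `(-1)^(m+(n-k))`. -/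
noncomputable def Box.sign {n : ℕ} (k : ℕ) (R : Box n) (v : Pt n) : ℤ :=
  (-1) ^ ((Finset.univ.filter (fun i => v i = R.lo i)).card + (n - k))

/-- The multiplicity `m_R(u)` of a point `u` with respect to a `k`-box `R`. -/
noncomputable def Box.mult {n : ℕ} (k : ℕ) (R : Box n) (u : Pt n) : ℤ :=
  if R.IsVertex u then R.sign k u else 0

/-- `V_{A,k}(R) = ∑_{v ∈ ver R} sign_R(v) · A(v)`. -/
noncomputable def Vvol {n : ℕ} (k : ℕ) (A : Pt n → ℝ) (R : Box n) : ℝ :=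
  ∑ v ∈ R.vertices, (R.sign k v : ℝ) * A v

/-- A function is `k`-increasing on `D` if `V_{A,k}(R) ≥ 0` for every `k`-box
with all vertices in `D`. -/
def KIncreasingOn {n : ℕ} (k : ℕ) (D : Set (Pt n)) (A : Pt n → ℝ) : Prop :=
  ∀ R : Box n, R.IsKBox k → (∀ v ∈ R.vertices, v ∈ D) → 0 ≤ Vvol k A R

/-- The multiplicity `m_DU(u)` of a point with respect to a formal (multiset)
disjoint union of `k`-boxes. -/
noncomputable def multDU {n : ℕ} (k : ℕ) (DU : Multiset (Box n)) (u : Pt n) : ℤ :=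
  (DU.map (fun R => R.mult k u)).sum

/-- `DU ∈ R_k(D)`: every box of the multiset `DU` is a `k`-box with all its
vertices in `D`. -/
def memRk {n : ℕ} (k : ℕ) (D : Set (Pt n)) (DU : Multiset (Box n)) : Prop :=
  ∀ R ∈ DU, R.IsKBox k ∧ ∀ v ∈ R.vertices, v ∈ D

/-- `L_k^{(A,B)}(DU) = ∑_{m_DU(u)>0} m_DU(u)·B(u) + ∑_{m_DU(u)<0} m_DU(u)·A(u)`. -/
noncomputable def Lk {n : ℕ} (k : ℕ) (A B : Pt n → ℝ) (DU : Multiset (Box n)) : ℝ :=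
  ∑ u ∈ DU.toFinset.biUnion Box.vertices,
    (if 0 < multDU k DU u then (multDU k DU u : ℝ) * B u
     else if multDU k DU u < 0 then (multDU k DU u : ℝ) * A u else 0)

/-- `P⁻_{k,D}^{(A,B)}(x)`, with the Mathlib convention `sInf ∅ = 0`. -/
noncomputable def Pneg {n : ℕ} (k : ℕ) (D : Set (Pt n)) (A B : Pt n → ℝ) (x : Pt n) : ℝ :=
  sInf {r : ℝ | ∃ DU : Multiset (Box n), memRk k D DU ∧ multDU k DU x < 0 ∧
    r = Lk k A B DU / |(multDU k DU x : ℝ)|}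

/-- `P⁺_{k,D}^{(A,B)}(x)`, with the Mathlib convention `sInf ∅ = 0`. -/
noncomputable def Ppos {n : ℕ} (k : ℕ) (D : Set (Pt n)) (A B : Pt n → ℝ) (x : Pt n) : ℝ :=
  sInf {r : ℝ | ∃ DU : Multiset (Box n), memRk k D DU ∧ 0 < multDU k DU x ∧
    r = Lk k A B DU / |(multDU k DU x : ℝ)|}

/-- `γ_{k,D}^{(A,B)}(x) = min {P⁻_{k,D}^{(A,B)}(x), B(x) - A(x)}`. -/
noncomputable def gammaK {n : ℕ} (k : ℕ) (D : Set (Pt n)) (A B : Pt n → ℝ) (x : Pt n) : ℝ :=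
  min (Pneg k D A B x) (B x - A x)

/-- `δ_{k,D}^{(A,B)}(x) = min {P⁺_{k,D}^{(A,B)}(x), B(x) - A(x)}`. -/
noncomputable def deltaK {n : ℕ} (k : ℕ) (D : Set (Pt n)) (A B : Pt n → ℝ) (x : Pt n) : ℝ :=
  min (Ppos k D A B x) (B x - A x)

/-- A dense countably infinite mesh `D = ∏ δᵢ` in `I^n`. -/
def IsMesh {n : ℕ} (D : Set (Pt n)) : Prop :=
  ∃ δ : Fin n → Set ℝ,
    (∀ i, δ i ⊆ Set.Icc (0:ℝ) 1 ∧ (δ i).Countable ∧ (δ i).Infinite ∧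
      Set.Icc (0:ℝ) 1 ⊆ closure (δ i) ∧ (0:ℝ) ∈ δ i ∧ (1:ℝ) ∈ δ i) ∧
    D = {x : Pt n | ∀ i, x i ∈ δ i}

/-- `A` is grounded: it vanishes whenever some coordinate is `0`. -/
def Grounded {n : ℕ} (A : Pt n → ℝ) : Prop :=
  ∀ x : Pt n, inCube x → (∃ i, x i = 0) → A x = 0

/-- `A` is 1-increasing (increasing in each variable). -/
def OneIncreasing {n : ℕ} (A : Pt n → ℝ) : Prop :=
  ∀ x y : Pt n, inCube x → inCube y → (∀ i, x i ≤ y i) → A x ≤ A y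

/-- `A` has uniform marginals. -/
def UniformMarginals {n : ℕ} (A : Pt n → ℝ) : Prop :=
  ∀ i : Fin n, ∀ t ∈ Set.Icc (0:ℝ) 1, A (Function.update (fun _ => (1:ℝ)) i t) = t

/-- `A` is a standardized function. -/
def Standardized {n : ℕ} (A : Pt n → ℝ) : Prop :=
  Grounded A ∧ OneIncreasing A ∧ A (fun _ => (1:ℝ)) = 1

/-- `A` is a semicopula. -/
def Semicopula {n : ℕ} (A : Pt n → ℝ) : Prop :=
  Grounded A ∧ OneIncreasing A ∧ UniformMarginals A

/-- `A` maps the unit cube into `I = [0,1]`. -/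
def MapsToI {n : ℕ} (A : Pt n → ℝ) : Prop :=
  ∀ x : Pt n, inCube x → A x ∈ Set.Icc (0:ℝ) 1

/-- Condition S: all discontinuities of all sections of `A` lie in the
countable set `S`. -/
def CondS {n : ℕ} (A : Pt n → ℝ) (S : Set ℝ) : Prop :=
  ∀ u : Pt n, inCube u → ∀ i : Fin n, ∀ t ∈ Set.Icc (0:ℝ) 1, t ∉ S →
    ContinuousWithinAt (fun s => A (Function.update u i s)) (Set.Icc (0:ℝ) 1) t

/-- A quasi-copula: a semicopula that is 1-Lipschitz w.r.t. the ℓ¹-norm. -/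
def QuasiCopula {n : ℕ} (A : Pt n → ℝ) : Prop :=
  Semicopula A ∧ ∀ x y : Pt n, inCube x → inCube y → |A x - A y| ≤ ∑ i, |x i - y i|

end KIncr

open KIncr

section Aux

open Finset

variable {n k : ℕ}

lemma mem_vertices_iff {R : Box n} {u : Pt n} : u ∈ R.vertices ↔ R.IsVertex u := by
  constructor
  · intro hu
    rw [Box.vertices, Finset.mem_image] at hu
    obtain ⟨e, -, rfl⟩ := hu
    intro i
    by_cases h : e i <;> simp [h]
  · intro hu
    rw [Box.vertices, Finset.mem_image]
    refine ⟨fun i => if u i = R.hi i then true else false, Finset.mem_univ _, ?_⟩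
    funext i
    by_cases h : u i = R.hi i
    · simp [h]
    · simp only [h, if_false]
      rcases hu i with h2 | h2
      · exact h2.symm
      · exact absurd h2 h

lemma sign_cases (k : ℕ) (R : Box n) (v : Pt n) : R.sign k v = 1 ∨ R.sign k v = -1 := by
  unfold Box.sign
  rcases Nat.even_or_odd ((Finset.univ.filter (fun i => v i = R.lo i)).card + (n - k)) with h | h
  · left; exact h.neg_one_pow
  · right; exact h.neg_one_pow

lemma mult_vertex {R : Box n} {u : Pt n} (h : R.IsVertex u) : R.mult k u = R.sign k u := by
  unfold Box.mult; rw [if_pos h]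

lemma vertex_inCube {R : Box n} (hK : R.IsKBox k) {u : Pt n} (hu : u ∈ R.vertices) :
    inCube u := by
  have hv := mem_vertices_iff.mp hu
  intro i
  rcases hv i with h | h
  · rw [h]; exact hK.1 i
  · rw [h]; exact hK.2.1 i

lemma memRk_singleton {R : Box n} (hK : R.IsKBox k) : memRk k (cubeSet n) ({R} : Multiset (Box n)) := by
  intro S hS
  rw [Multiset.mem_singleton] at hS
  subst hS
  exact ⟨hK, fun v hv => vertex_inCube hK hv⟩

lemma multDU_singleton (R : Box n) (u : Pt n) : multDU k ({R} : Multiset (Box n)) u = R.mult k u := by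
  unfold multDU
  rw [Multiset.map_singleton, Multiset.sum_singleton]

lemma Lk_singleton (A B : Pt n → ℝ) (R : Box n) :
    Lk k A B ({R} : Multiset (Box n)) =
      ∑ u ∈ R.vertices, (if R.sign k u = 1 then B u else -(A u)) := by
  unfold Lk
  rw [Multiset.toFinset_singleton, Finset.singleton_biUnion]
  apply Finset.sum_congr rfl
  intro u hu
  have hv : R.IsVertex u := mem_vertices_iff.mp hu
  have hm : multDU k ({R} : Multiset (Box n)) u = R.sign k u := by
    rw [multDU_singleton, mult_vertex hv]
  rcases sign_cases k R u with hs | hs <;> rw [hm, hs] <;> norm_num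

lemma sc_le_coord {B : Pt n → ℝ} (hB : Semicopula B) {u : Pt n} (hu : inCube u) (i : Fin n) :
    B u ≤ u i := by
  have h1 : inCube (Function.update (fun _ => (1:ℝ)) i (u i)) := by
    intro j
    by_cases hj : j = i
    · subst hj; simp only [Function.update_self]; exact hu j
    · simp only [Function.update_of_ne hj]; exact ⟨zero_le_one, le_refl 1⟩
  have h2 : B u ≤ B (Function.update (fun _ => (1:ℝ)) i (u i)) := by
    apply hB.2.1 u _ hu h1
    intro j
    by_cases hj : j = i
    · subst hj; simp only [Function.update_self]; exact le_refl _
    · simp only [Function.update_of_ne hj]; exact (hu j).2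
  calc B u ≤ _ := h2
    _ = u i := hB.2.2 i (u i) (hu i)

lemma card_vertices_le (R : Box n) : R.vertices.card ≤ 2 ^ n := by
  calc R.vertices.card ≤ (Finset.univ : Finset (Fin n → Bool)).card := Finset.card_image_le
    _ = 2 ^ n := by simp [Finset.card_univ]

lemma sum_le_two {V : Finset (Pt n)} {f : Pt n → ℝ} {x y : Pt n}
    (hx : x ∈ V) (hy : y ∈ V) (hxy : x ≠ y)
    (hrest : ∀ u ∈ V, u ≠ x → u ≠ y → f u ≤ 0) :
    ∑ u ∈ V, f u ≤ f x + f y := by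
  rw [← Finset.add_sum_erase _ _ hx]
  have hy' : y ∈ V.erase x := Finset.mem_erase.mpr ⟨Ne.symm hxy, hy⟩
  rw [← Finset.add_sum_erase _ _ hy']
  have hrest' : ∑ u ∈ (V.erase x).erase y, f u ≤ 0 := by
    apply Finset.sum_nonpos
    intro u hu
    have h1 := Finset.mem_erase.mp hu
    have h2 := Finset.mem_erase.mp h1.2
    exact hrest u h2.2 h2.1 h1.1
  linarith

lemma sInf_helper {S : Set ℝ} {c : ℝ} (hc : 0 ≤ c)
    (H : ∀ ε > (0:ℝ), S.Nonempty → ∃ e ∈ S, e ≤ c + ε) : sInf S ≤ c := by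
  rcases Set.eq_empty_or_nonempty S with h | h
  · rw [h, Real.sInf_empty]; exact hc
  by_cases hb : BddBelow S
  · refine le_of_forall_pos_le_add ?_
    intro ε hε
    obtain ⟨e, heS, hee⟩ := H ε hε h
    exact (csInf_le hb heS).trans hee
  · rw [Real.sInf_of_not_bddBelow hb]; exact hc

lemma msum_nonpos (s : Multiset ℤ) : (∀ a ∈ s, a ≤ 0) → s.sum ≤ 0 := by
  refine Multiset.induction_on s (by intro _; simp) ?_
  intro a t ih h
  rw [Multiset.sum_cons]
  have h1 := h a (Multiset.mem_cons_self a t)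
  have h2 := ih fun b hb => h b (Multiset.mem_cons_of_mem hb)
  linarith

lemma msum_nonneg (s : Multiset ℤ) : (∀ a ∈ s, 0 ≤ a) → 0 ≤ s.sum := by
  refine Multiset.induction_on s (by intro _; simp) ?_
  intro a t ih h
  rw [Multiset.sum_cons]
  have h1 := h a (Multiset.mem_cons_self a t)
  have h2 := ih fun b hb => h b (Multiset.mem_cons_of_mem hb)
  linarith

lemma exists_box_neg {DU : Multiset (Box n)} {x : Pt n} (h : multDU k DU x < 0) :
    ∃ R ∈ DU, R.IsVertex x ∧ R.sign k x = -1 := by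
  have : ∃ R ∈ DU, R.mult k x < 0 := by
    by_contra hc
    push_neg at hc
    have h0 : (0:ℤ) ≤ multDU k DU x := by
      apply msum_nonneg
      intro a ha
      obtain ⟨R, hR, rfl⟩ := Multiset.mem_map.mp ha
      exact hc R hR
    omega
  obtain ⟨R, hR, hm⟩ := this
  have hv : R.IsVertex x := by
    by_contra hvc
    unfold Box.mult at hm
    rw [if_neg hvc] at hm
    omega
  refine ⟨R, hR, hv, ?_⟩
  have := mult_vertex (k := k) hv
  rcases sign_cases k R x with hs | hs
  · omega
  · exact hs

lemma exists_box_pos {DU : Multiset (Box n)} {x : Pt n} (h : 0 < multDU k DU x) :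
    ∃ R ∈ DU, R.IsVertex x ∧ R.sign k x = 1 := by
  have : ∃ R ∈ DU, 0 < R.mult k x := by
    by_contra hc
    push_neg at hc
    have h0 : multDU k DU x ≤ 0 := by
      apply msum_nonpos
      intro a ha
      obtain ⟨R, hR, rfl⟩ := Multiset.mem_map.mp ha
      exact hc R hR
    omega
  obtain ⟨R, hR, hm⟩ := this
  have hv : R.IsVertex x := by
    by_contra hvc
    unfold Box.mult at hm
    rw [if_neg hvc] at hm
    omega
  refine ⟨R, hR, hv, ?_⟩
  have := mult_vertex (k := k) hv
  rcases sign_cases k R x with hs | hs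
  · exact hs
  · omega

end Aux

section CaseZ

variable {n k : ℕ}

lemma caseZ (A B : Pt n → ℝ) (hBsc : Semicopula B) (hAI : MapsToI A)
    (x : Pt n) (hx : inCube x) (j₀ : Fin n) (hj₀ : x j₀ = 0)
    (R₀ : Box n) (hK : R₀.IsKBox k) (hv : R₀.IsVertex x)
    (ε : ℝ) (hε : 0 < ε) :
    ∃ R : Box n, R.IsKBox k ∧ R.IsVertex x ∧
      (Finset.univ.filter (fun i => x i = R.lo i)) =
        (Finset.univ.filter (fun i => x i = R₀.lo i)) ∧
      Lk k A B ({R} : Multiset (Box n)) ≤ ε := by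
  set h : ℝ := ε / 2 ^ n with hh_def
  have hh : 0 < h := by positivity
  set H : Finset (Fin n) := Finset.univ.filter (fun i => ¬ x i = R₀.lo i) with hH_def
  have hHhi : ∀ i ∈ H, x i = R₀.hi i := by
    intro i hi
    rw [hH_def, Finset.mem_filter] at hi
    rcases hv i with h2 | h2
    · exact absurd h2 hi.2
    · exact h2
  have hHnd : ∀ i ∈ H, R₀.lo i < R₀.hi i := by
    intro i hi
    have h1 := hHhi i hi
    rw [hH_def, Finset.mem_filter] at hi
    have h2 := hK.2.2.1 i
    rcases lt_or_eq_of_le h2 with h3 | h3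
    · exact h3
    · exact absurd (h1.trans h3.symm) hi.2
  have hHpos : ∀ i ∈ H, 0 < x i := by
    intro i hi
    have := hHnd i hi
    have := hK.1 i
    rw [hHhi i hi]
    have h0 : (0:ℝ) ≤ R₀.lo i := (hK.1 i).1
    linarith
  set N₀ : Finset (Fin n) := Finset.univ.filter (fun i => R₀.lo i < R₀.hi i) with hN_def
  have hNcard : N₀.card = k := hK.2.2.2
  have hHN : H ⊆ N₀ := by
    intro i hi
    rw [hN_def, Finset.mem_filter]
    exact ⟨Finset.mem_univ _, hHnd i hi⟩
  have hxlt1 : ∀ i ∈ N₀, i ∉ H → x i < 1 := by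
    intro i hiN hiH
    rw [hH_def, Finset.mem_filter] at hiH
    push_neg at hiH
    have hlo : x i = R₀.lo i := hiH (Finset.mem_univ _)
    rw [hN_def, Finset.mem_filter] at hiN
    have := (hK.2.1 i).2
    linarith [hiN.2]
  set R : Box n := ⟨fun i => if i ∈ H then 0 else x i,
    fun i => if i ∈ H then x i else if i ∈ N₀ then x i + min h (1 - x i) else x i⟩ with hR_def
  have hj₀H : j₀ ∉ H := by
    intro hc
    have := hHpos j₀ hc
    rw [hj₀] at this
    exact lt_irrefl _ this
  have hlocube : inCube R.lo := by
    intro i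
    by_cases hiH : i ∈ H
    · simp [hR_def, hiH]
    · simp only [hR_def, hiH, if_neg, if_false]
      exact hx i
  have hminnn : ∀ i, 0 ≤ min h (1 - x i) → True := fun _ _ => trivial
  have hhicube : inCube R.hi := by
    intro i
    by_cases hiH : i ∈ H
    · simp only [hR_def, hiH, if_pos]; exact hx i
    · by_cases hiN : i ∈ N₀
      · simp only [hR_def, hiH, if_false, hiN, if_pos]
        constructor
        · have := (hx i).1
          have h2 : (0:ℝ) ≤ min h (1 - x i) := le_min hh.le (by linarith [hxlt1 i hiN hiH])
          linarith
        · have := min_le_right h (1 - x i)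
          linarith
      · simp only [hR_def, hiH, hiN, if_false]
        exact hx i
  have hlohi : ∀ i, R.lo i ≤ R.hi i := by
    intro i
    by_cases hiH : i ∈ H
    · simp only [hR_def, hiH, if_pos]
      exact (hx i).1
    · by_cases hiN : i ∈ N₀
      · simp only [hR_def, hiH, if_false, hiN, if_pos]
        have h2 : (0:ℝ) ≤ min h (1 - x i) := le_min hh.le (by linarith [hxlt1 i hiN hiH])
        linarith
      · simp only [hR_def, hiH, hiN, if_false]
        exact le_refl _
  have hfil : Finset.univ.filter (fun i => R.lo i < R.hi i) = N₀ := by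
    ext i
    simp only [Finset.mem_filter, Finset.mem_univ, true_and]
    by_cases hiH : i ∈ H
    · simp only [hR_def, hiH, if_pos]
      constructor
      · intro _; exact hHN hiH
      · intro _; exact hHpos i hiH
    · by_cases hiN : i ∈ N₀
      · have hgt : R.lo i < R.hi i := by
          simp only [hR_def, hiH, if_false, hiN, if_true]
          have h2 : (0:ℝ) < min h (1 - x i) := lt_min hh (by linarith [hxlt1 i hiN hiH])
          linarith
        exact iff_of_true hgt hiN
      · have hng : ¬ (R.lo i < R.hi i) := by
          simp only [hR_def, hiH, hiN, if_false]
          exact lt_irrefl _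
        exact iff_of_false hng hiN
  have hKR : R.IsKBox k := ⟨hlocube, hhicube, hlohi, by rw [hfil]; exact hNcard⟩
  have hvR : R.IsVertex x := by
    intro i
    by_cases hiH : i ∈ H
    · right; simp [hR_def, hiH]
    · left; simp [hR_def, hiH]
  have hfileq : (Finset.univ.filter (fun i => x i = R.lo i)) =
      (Finset.univ.filter (fun i => x i = R₀.lo i)) := by
    ext i
    simp only [Finset.mem_filter, Finset.mem_univ, true_and]
    by_cases hiH : i ∈ H
    · have h1 : ¬ x i = R.lo i := by
        simp only [hR_def, hiH, if_pos]
        exact ne_of_gt (hHpos i hiH)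
      have h2 : ¬ x i = R₀.lo i := by
        rw [hH_def, Finset.mem_filter] at hiH
        exact hiH.2
      exact iff_of_false h1 h2
    · have h1 : x i = R.lo i := by simp [hR_def, hiH]
      have h2 : x i = R₀.lo i := by
        rw [hH_def, Finset.mem_filter] at hiH
        push_neg at hiH
        exact hiH (Finset.mem_univ _)
      exact iff_of_true h1 h2
  refine ⟨R, hKR, hvR, hfileq, ?_⟩
  rw [Lk_singleton]
  have hbound : ∀ u ∈ R.vertices, (if R.sign k u = 1 then B u else -(A u)) ≤ h := by
    intro u hu
    have hucube : inCube u := vertex_inCube hKR hu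
    have huv : R.IsVertex u := mem_vertices_iff.mp hu
    have huj₀ : u j₀ ≤ h := by
      rcases huv j₀ with h2 | h2
      · rw [h2]
        simp only [hR_def, hj₀H, if_false]
        rw [hj₀]; exact hh.le
      · rw [h2]
        by_cases hN : j₀ ∈ N₀
        · simp only [hR_def, hj₀H, if_false, hN, if_pos]
          rw [hj₀]
          have := min_le_left h (1 - (0:ℝ))
          linarith
        · simp only [hR_def, hj₀H, hN, if_false]
          rw [hj₀]; exact hh.le
    by_cases hs : R.sign k u = 1
    · rw [if_pos hs]
      exact (sc_le_coord hBsc hucube j₀).trans huj₀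
    · rw [if_neg hs]
      have := (hAI u hucube).1
      linarith
  calc ∑ u ∈ R.vertices, (if R.sign k u = 1 then B u else -(A u))
      ≤ R.vertices.card • h := Finset.sum_le_card_nsmul _ _ _ hbound
    _ = (R.vertices.card : ℝ) * h := by rw [nsmul_eq_mul]
    _ ≤ (2:ℝ) ^ n * h := by
        apply mul_le_mul_of_nonneg_right _ hh.le
        have := card_vertices_le R
        calc ((R.vertices.card : ℕ) : ℝ) ≤ ((2 ^ n : ℕ) : ℝ) := by exact_mod_cast this
          _ = (2:ℝ) ^ n := by push_cast; ring
    _ = ε := by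
        rw [hh_def]
        field_simp

end CaseZ

section CaseM

variable {n k : ℕ}

lemma sign_eval (k : ℕ) (R : Box n) (v : Pt n) (m : ℕ)
    (hm : (Finset.univ.filter (fun i => v i = R.lo i)).card = m) :
    R.sign k v = (-1) ^ (m + (n - k)) := by
  unfold Box.sign; rw [hm]

lemma caseMneg (hk1 : 1 ≤ k) (hkn : k ≤ n) (A B : Pt n → ℝ)
    (hBsc : Semicopula B) (hAI : MapsToI A)
    (hcont : ContinuousOn B (cubeSet n))
    (x : Pt n) (hx : inCube x) (hpos : ∀ i, 0 < x i)
    (j : Fin n) (hj : x j < 1) (ε : ℝ) (hε : 0 < ε) :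
    ∃ R : Box n, R.IsKBox k ∧ R.IsVertex x ∧ R.sign k x = -1 ∧
      Lk k A B ({R} : Multiset (Box n)) ≤ B x - A x + ε := by
  have hxS : x ∈ cubeSet n := hx
  have hcx := hcont x hxS
  rw [Metric.continuousWithinAt_iff] at hcx
  obtain ⟨δ, hδ, hδP⟩ := hcx ε hε
  set h : ℝ := min (δ / 2) (1 - x j) with hh_def
  have hh : 0 < h := lt_min (by linarith) (by linarith)
  obtain ⟨H₁, hH₁sub, hH₁card⟩ := Finset.exists_subset_card_eq (s := Finset.univ.erase j) (n := k - 1)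
    (by
      rw [Finset.card_erase_of_mem (Finset.mem_univ j), Finset.card_univ, Fintype.card_fin]
      omega)
  have hjH₁ : j ∉ H₁ := fun hm => (Finset.mem_erase.mp (hH₁sub hm)).1 rfl
  set R : Box n := ⟨fun i => if i ∈ H₁ then 0 else x i,
    fun i => if i = j then x j + h else x i⟩ with hR_def
  set y : Pt n := Function.update x j (x j + h) with hy_def
  have hxj1 : x j + h ≤ 1 := by
    have := min_le_right (δ / 2) (1 - x j)
    rw [hh_def]; linarith
  have hlocube : inCube R.lo := by
    intro i
    by_cases hiH : i ∈ H₁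
    · simp only [hR_def, hiH, if_pos]
      exact ⟨le_refl 0, zero_le_one⟩
    · simp only [hR_def, hiH, if_false]
      exact hx i
  have hhicube : inCube R.hi := by
    intro i
    by_cases hij : i = j
    · subst hij
      simp only [hR_def, if_pos]
      constructor
      · have := (hx i).1; linarith
      · exact hxj1
    · simp only [hR_def, hij, if_false]
      exact hx i
  have hlohi : ∀ i, R.lo i ≤ R.hi i := by
    intro i
    by_cases hij : i = j
    · subst hij
      simp only [hR_def, hjH₁, if_false, if_pos]
      linarith
    · by_cases hiH : i ∈ H₁
      · simp only [hR_def, hiH, if_pos, hij, if_false]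
        exact (hx i).1
      · simp only [hR_def, hiH, hij, if_false]
        exact le_refl _
  have hfil : Finset.univ.filter (fun i => R.lo i < R.hi i) = insert j H₁ := by
    ext i
    simp only [Finset.mem_filter, Finset.mem_univ, true_and, Finset.mem_insert]
    by_cases hij : i = j
    · subst hij
      have : R.lo i < R.hi i := by
        simp only [hR_def, hjH₁, if_false, if_pos]
        linarith
      exact iff_of_true this (Or.inl rfl)
    · by_cases hiH : i ∈ H₁
      · have : R.lo i < R.hi i := by
          simp only [hR_def, hiH, if_pos, hij, if_false]
          exact hpos i
        exact iff_of_true this (Or.inr hiH)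
      · have : ¬ (R.lo i < R.hi i) := by
          simp only [hR_def, hiH, hij, if_false]
          exact lt_irrefl _
        exact iff_of_false this (by
          intro hc
          rcases hc with hc | hc
          · exact hij hc
          · exact hiH hc)
  have hKR : R.IsKBox k := by
    refine ⟨hlocube, hhicube, hlohi, ?_⟩
    rw [hfil, Finset.card_insert_of_notMem hjH₁, hH₁card]
    omega
  have hvR : R.IsVertex x := by
    intro i
    by_cases hiH : i ∈ H₁
    · right
      have hij : i ≠ j := fun hc => hjH₁ (hc ▸ hiH)
      simp [hR_def, hij]
    · left; simp [hR_def, hiH]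
  have hfilx : Finset.univ.filter (fun i => x i = R.lo i) = Finset.univ \ H₁ := by
    ext i
    simp only [Finset.mem_filter, Finset.mem_univ, true_and, Finset.mem_sdiff]
    by_cases hiH : i ∈ H₁
    · have : ¬ x i = R.lo i := by
        simp only [hR_def, hiH, if_pos]
        exact ne_of_gt (hpos i)
      exact iff_of_false this (by simp [hiH])
    · have : x i = R.lo i := by simp [hR_def, hiH]
      exact iff_of_true this hiH
  have hcardx : (Finset.univ.filter (fun i => x i = R.lo i)).card = n - (k - 1) := by
    rw [hfilx, Finset.card_sdiff_of_subset (Finset.subset_univ H₁), Finset.card_univ, Fintype.card_fin,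
      hH₁card]
  have hsignx : R.sign k x = -1 := by
    rw [sign_eval k R x _ hcardx]
    exact Odd.neg_one_pow ⟨n - k, by omega⟩
  have hvy : R.IsVertex y := by
    intro i
    by_cases hij : i = j
    · subst hij
      right
      simp [hR_def, hy_def]
    · rcases hvR i with h2 | h2
      · left
        rw [hy_def, Function.update_of_ne hij]
        exact h2
      · right
        rw [hy_def, Function.update_of_ne hij]
        exact h2
  have hfily : Finset.univ.filter (fun i => y i = R.lo i) = Finset.univ \ insert j H₁ := by
    ext i
    simp only [Finset.mem_filter, Finset.mem_univ, true_and, Finset.mem_sdiff,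
      Finset.mem_insert]
    by_cases hij : i = j
    · subst hij
      have : ¬ y i = R.lo i := by
        rw [hy_def, Function.update_self]
        simp only [hR_def, hjH₁, if_false]
        intro hc
        have : (0:ℝ) < h := hh
        linarith [hc]
      exact iff_of_false this (by simp)
    · by_cases hiH : i ∈ H₁
      · have : ¬ y i = R.lo i := by
          rw [hy_def, Function.update_of_ne hij]
          simp only [hR_def, hiH, if_pos]
          exact ne_of_gt (hpos i)
        exact iff_of_false this (by simp [hiH])
      · have : y i = R.lo i := by
          rw [hy_def, Function.update_of_ne hij]
          simp [hR_def, hiH]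
        exact iff_of_true this (by
          intro hc
          rcases hc with hc | hc
          · exact hij hc
          · exact hiH hc)
  have hcardy : (Finset.univ.filter (fun i => y i = R.lo i)).card = n - k := by
    rw [hfily, Finset.card_sdiff_of_subset (Finset.subset_univ _), Finset.card_univ, Fintype.card_fin,
      Finset.card_insert_of_notMem hjH₁, hH₁card]
    omega
  have hsigny : R.sign k y = 1 := by
    rw [sign_eval k R y _ hcardy]
    exact Even.neg_one_pow ⟨n - k, rfl⟩
  have hxy : x ≠ y := by
    intro hc
    have := congrFun hc j
    rw [hy_def, Function.update_self] at this
    linarith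
  have hycube : inCube y := by
    intro i
    by_cases hij : i = j
    · subst hij
      rw [hy_def, Function.update_self]
      constructor
      · have := (hx i).1; linarith
      · exact hxj1
    · rw [hy_def, Function.update_of_ne hij]
      exact hx i
  have hBy : B y ≤ B x + ε := by
    have hdist : dist y x < δ := by
      rw [dist_pi_lt_iff hδ]
      intro i
      by_cases hij : i = j
      · subst hij
        rw [hy_def, Function.update_self, Real.dist_eq]
        have : |x i + h - x i| = h := by
          rw [show x i + h - x i = h by ring]
          exact abs_of_pos hh
        rw [this]
        have hml := min_le_left (δ / 2) (1 - x i)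
        rw [hh_def]
        linarith
      · rw [hy_def, Function.update_of_ne hij, dist_self]
        exact hδ
    have := hδP hycube hdist
    rw [Real.dist_eq] at this
    have := abs_lt.mp this
    linarith [this.1, this.2]
  have hsum : ∑ u ∈ R.vertices, (if R.sign k u = 1 then B u else -(A u)) ≤
      (if R.sign k x = 1 then B x else -(A x)) + (if R.sign k y = 1 then B y else -(A y)) := by
    apply sum_le_two (mem_vertices_iff.mpr hvR) (mem_vertices_iff.mpr hvy) hxy
    intro u hu hux huy
    have hucube : inCube u := vertex_inCube hKR hu
    have huv : R.IsVertex u := mem_vertices_iff.mp hu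
    have hzero : ∃ i ∈ H₁, u i = 0 := by
      by_contra hc
      push_neg at hc
      have hcoord : ∀ i, i ≠ j → u i = x i := by
        intro i hij
        rcases huv i with h2 | h2
        · by_cases hiH : i ∈ H₁
          · exfalso
            apply hc i hiH
            rw [h2]
            simp [hR_def, hiH]
          · rw [h2]; simp [hR_def, hiH]
        · rw [h2]; simp [hR_def, hij]
      rcases huv j with h2 | h2
      · apply hux
        funext i
        by_cases hij : i = j
        · subst hij
          rw [h2]
          simp [hR_def, hjH₁]
        · exact hcoord i hij
      · apply huy
        funext i
        by_cases hij : i = j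
        · subst hij
          rw [h2, hy_def, Function.update_self]
          simp [hR_def]
        · rw [hcoord i hij, hy_def, Function.update_of_ne hij]
    obtain ⟨i, hiH, hi0⟩ := hzero
    by_cases hs : R.sign k u = 1
    · rw [if_pos hs]
      have := sc_le_coord hBsc hucube i
      rw [hi0] at this
      exact this
    · rw [if_neg hs]
      have := (hAI u hucube).1
      linarith
  have hfx : (if R.sign k x = 1 then B x else -(A x)) = -(A x) := by
    rw [if_neg (by rw [hsignx]; decide)]
  have hfy : (if R.sign k y = 1 then B y else -(A y)) = B y := by
    rw [if_pos hsigny]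
  refine ⟨R, hKR, hvR, hsignx, ?_⟩
  rw [Lk_singleton]
  calc ∑ u ∈ R.vertices, (if R.sign k u = 1 then B u else -(A u)) ≤ _ := hsum
    _ = -(A x) + B y := by rw [hfx, hfy]
    _ ≤ B x - A x + ε := by linarith

lemma caseMpos (hn : 1 ≤ n) (hk1 : 1 ≤ k) (hkn : k ≤ n) (A B : Pt n → ℝ)
    (hBsc : Semicopula B) (hAI : MapsToI A)
    (hcont : ContinuousOn A (cubeSet n))
    (x : Pt n) (hx : inCube x) (hpos : ∀ i, 0 < x i)
    (ε : ℝ) (hε : 0 < ε) :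
    ∃ R : Box n, R.IsKBox k ∧ R.IsVertex x ∧ R.sign k x = 1 ∧
      Lk k A B ({R} : Multiset (Box n)) ≤ B x - A x + ε := by
  have hxS : x ∈ cubeSet n := hx
  have hcx := hcont x hxS
  rw [Metric.continuousWithinAt_iff] at hcx
  obtain ⟨δ, hδ, hδP⟩ := hcx ε hε
  obtain ⟨j⟩ : Nonempty (Fin n) := ⟨⟨0, hn⟩⟩
  set h : ℝ := min (δ / 2) (x j) with hh_def
  have hh : 0 < h := lt_min (by linarith) (hpos j)
  have hhxj : h ≤ x j := min_le_right _ _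
  obtain ⟨H₁, hH₁sub, hH₁card⟩ := Finset.exists_subset_card_eq (s := Finset.univ.erase j) (n := k - 1)
    (by
      rw [Finset.card_erase_of_mem (Finset.mem_univ j), Finset.card_univ, Fintype.card_fin]
      omega)
  have hjH₁ : j ∉ H₁ := fun hm => (Finset.mem_erase.mp (hH₁sub hm)).1 rfl
  set R : Box n := ⟨fun i => if i = j then x j - h else if i ∈ H₁ then 0 else x i,
    fun i => x i⟩ with hR_def
  set y : Pt n := Function.update x j (x j - h) with hy_def
  have hlocube : inCube R.lo := by
    intro i
    by_cases hij : i = j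
    · subst hij
      simp only [hR_def, if_pos]
      constructor
      · linarith
      · have := (hx i).2; linarith
    · by_cases hiH : i ∈ H₁
      · simp only [hR_def, hij, if_false, hiH, if_pos]
        exact ⟨le_refl 0, zero_le_one⟩
      · simp only [hR_def, hij, hiH, if_false]
        exact hx i
  have hhicube : inCube R.hi := by
    intro i; exact hx i
  have hlohi : ∀ i, R.lo i ≤ R.hi i := by
    intro i
    by_cases hij : i = j
    · subst hij
      simp only [hR_def, if_pos]
      linarith
    · by_cases hiH : i ∈ H₁
      · simp only [hR_def, hij, if_false, hiH, if_pos]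
        exact (hx i).1
      · simp only [hR_def, hij, hiH, if_false]
        exact le_refl _
  have hfil : Finset.univ.filter (fun i => R.lo i < R.hi i) = insert j H₁ := by
    ext i
    simp only [Finset.mem_filter, Finset.mem_univ, true_and, Finset.mem_insert]
    by_cases hij : i = j
    · subst hij
      have : R.lo i < R.hi i := by
        simp only [hR_def, if_pos]
        linarith
      exact iff_of_true this (Or.inl rfl)
    · by_cases hiH : i ∈ H₁
      · have : R.lo i < R.hi i := by
          simp only [hR_def, hij, if_false, hiH, if_pos]
          exact hpos i
        exact iff_of_true this (Or.inr hiH)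
      · have : ¬ (R.lo i < R.hi i) := by
          simp only [hR_def, hij, hiH, if_false]
          exact lt_irrefl _
        exact iff_of_false this (by
          intro hc
          rcases hc with hc | hc
          · exact hij hc
          · exact hiH hc)
  have hKR : R.IsKBox k := by
    refine ⟨hlocube, hhicube, hlohi, ?_⟩
    rw [hfil, Finset.card_insert_of_notMem hjH₁, hH₁card]
    omega
  have hvR : R.IsVertex x := by
    intro i; right; rfl
  have hfilx : Finset.univ.filter (fun i => x i = R.lo i) = Finset.univ \ insert j H₁ := by
    ext i
    simp only [Finset.mem_filter, Finset.mem_univ, true_and, Finset.mem_sdiff,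
      Finset.mem_insert]
    by_cases hij : i = j
    · subst hij
      have : ¬ x i = R.lo i := by
        simp only [hR_def, if_pos]
        intro hc; linarith
      exact iff_of_false this (by simp)
    · by_cases hiH : i ∈ H₁
      · have : ¬ x i = R.lo i := by
          simp only [hR_def, hij, if_false, hiH, if_pos]
          exact ne_of_gt (hpos i)
        exact iff_of_false this (by simp [hiH])
      · have : x i = R.lo i := by simp [hR_def, hij, hiH]
        exact iff_of_true this (by
          intro hc
          rcases hc with hc | hc
          · exact hij hc
          · exact hiH hc)
  have hcardx : (Finset.univ.filter (fun i => x i = R.lo i)).card = n - k := by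
    rw [hfilx, Finset.card_sdiff_of_subset (Finset.subset_univ _), Finset.card_univ, Fintype.card_fin,
      Finset.card_insert_of_notMem hjH₁, hH₁card]
    omega
  have hsignx : R.sign k x = 1 := by
    rw [sign_eval k R x _ hcardx]
    exact Even.neg_one_pow ⟨n - k, rfl⟩
  have hvy : R.IsVertex y := by
    intro i
    by_cases hij : i = j
    · subst hij
      left
      rw [hy_def, Function.update_self]
      simp [hR_def]
    · right
      rw [hy_def, Function.update_of_ne hij]
  have hfily : Finset.univ.filter (fun i => y i = R.lo i) = Finset.univ \ H₁ := by
    ext i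
    simp only [Finset.mem_filter, Finset.mem_univ, true_and, Finset.mem_sdiff]
    by_cases hij : i = j
    · subst hij
      have : y i = R.lo i := by
        rw [hy_def, Function.update_self]
        simp [hR_def]
      exact iff_of_true this hjH₁
    · by_cases hiH : i ∈ H₁
      · have : ¬ y i = R.lo i := by
          rw [hy_def, Function.update_of_ne hij]
          simp only [hR_def, hij, if_false, hiH, if_pos]
          exact ne_of_gt (hpos i)
        exact iff_of_false this (by simp [hiH])
      · have : y i = R.lo i := by
          rw [hy_def, Function.update_of_ne hij]
          simp [hR_def, hij, hiH]
        exact iff_of_true this hiH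
  have hcardy : (Finset.univ.filter (fun i => y i = R.lo i)).card = n - (k - 1) := by
    rw [hfily, Finset.card_sdiff_of_subset (Finset.subset_univ _), Finset.card_univ, Fintype.card_fin,
      hH₁card]
  have hsigny : R.sign k y = -1 := by
    rw [sign_eval k R y _ hcardy]
    exact Odd.neg_one_pow ⟨n - k, by omega⟩
  have hxy : x ≠ y := by
    intro hc
    have := congrFun hc j
    rw [hy_def, Function.update_self] at this
    linarith
  have hycube : inCube y := by
    intro i
    by_cases hij : i = j
    · subst hij
      rw [hy_def, Function.update_self]
      constructor
      · linarith
      · have := (hx i).2; linarith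
    · rw [hy_def, Function.update_of_ne hij]
      exact hx i
  have hAy : -(A y) ≤ -(A x) + ε := by
    have hdist : dist y x < δ := by
      rw [dist_pi_lt_iff hδ]
      intro i
      by_cases hij : i = j
      · subst hij
        rw [hy_def, Function.update_self, Real.dist_eq]
        have : |x i - h - x i| = h := by
          rw [show x i - h - x i = -h by ring, abs_neg]
          exact abs_of_pos hh
        rw [this]
        have hml := min_le_left (δ / 2) (x i)
        rw [hh_def]
        linarith
      · rw [hy_def, Function.update_of_ne hij, dist_self]
        exact hδ
    have := hδP hycube hdist
    rw [Real.dist_eq] at this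
    have := abs_lt.mp this
    linarith [this.1, this.2]
  have hsum : ∑ u ∈ R.vertices, (if R.sign k u = 1 then B u else -(A u)) ≤
      (if R.sign k x = 1 then B x else -(A x)) + (if R.sign k y = 1 then B y else -(A y)) := by
    apply sum_le_two (mem_vertices_iff.mpr hvR) (mem_vertices_iff.mpr hvy) hxy
    intro u hu hux huy
    have hucube : inCube u := vertex_inCube hKR hu
    have huv : R.IsVertex u := mem_vertices_iff.mp hu
    have hzero : ∃ i ∈ H₁, u i = 0 := by
      by_contra hc
      push_neg at hc
      have hcoord : ∀ i, i ≠ j → u i = x i := by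
        intro i hij
        rcases huv i with h2 | h2
        · by_cases hiH : i ∈ H₁
          · exfalso
            apply hc i hiH
            rw [h2]
            simp [hR_def, hij, hiH]
          · rw [h2]; simp [hR_def, hij, hiH]
        · rw [h2]
      rcases huv j with h2 | h2
      · apply huy
        funext i
        by_cases hij : i = j
        · subst hij
          rw [h2, hy_def, Function.update_self]
          simp [hR_def]
        · rw [hcoord i hij, hy_def, Function.update_of_ne hij]
      · apply hux
        funext i
        by_cases hij : i = j
        · subst hij
          rw [h2]
        · exact hcoord i hij
    obtain ⟨i, hiH, hi0⟩ := hzero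
    by_cases hs : R.sign k u = 1
    · rw [if_pos hs]
      have := sc_le_coord hBsc hucube i
      rw [hi0] at this
      exact this
    · rw [if_neg hs]
      have := (hAI u hucube).1
      linarith
  have hfx : (if R.sign k x = 1 then B x else -(A x)) = B x := by
    rw [if_pos hsignx]
  have hfy : (if R.sign k y = 1 then B y else -(A y)) = -(A y) := by
    rw [if_neg (by rw [hsigny]; decide)]
  refine ⟨R, hKR, hvR, hsignx, ?_⟩
  rw [Lk_singleton]
  calc ∑ u ∈ R.vertices, (if R.sign k u = 1 then B u else -(A u)) ≤ _ := hsum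
    _ = B x + -(A y) := by rw [hfx, hfy]
    _ ≤ B x - A x + ε := by linarith

lemma sign_at_one (k : ℕ) (R₀ : Box n) (hK : R₀.IsKBox k) (x : Pt n)
    (hv : R₀.IsVertex x) (h1 : ∀ i, x i = 1) : R₀.sign k x = 1 := by
  have hfil : Finset.univ.filter (fun i => x i = R₀.lo i) =
      Finset.univ.filter (fun i => ¬ R₀.lo i < R₀.hi i) := by
    ext i
    simp only [Finset.mem_filter, Finset.mem_univ, true_and]
    constructor
    · intro hc
      intro hlt
      have := (hK.2.1 i).2
      rw [h1 i] at hc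
      linarith
    · intro hc
      rcases hv i with h2 | h2
      · exact h2
      · have := le_antisymm (not_lt.mp hc) (hK.2.2.1 i)
        rw [h2, this]
  have hcard : (Finset.univ.filter (fun i => x i = R₀.lo i)).card = n - k := by
    rw [hfil, Finset.filter_not, Finset.card_sdiff_of_subset (Finset.filter_subset _ _),
      Finset.card_univ, Fintype.card_fin, hK.2.2.2]
  rw [sign_eval k R₀ x _ hcard]
  exact Even.neg_one_pow ⟨n - k, rfl⟩

end CaseM

/-- Lemma 2.8: upper bounds for `P⁻` and `P⁺` for semicopulas. -/
theorem stmt2 (n k : ℕ) (hn : 1 ≤ n) (hk1 : 1 ≤ k) (hkn : k ≤ n)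
    (A B : Pt n → ℝ) (hA : Semicopula A) (hB : Semicopula B)
    (hAI : MapsToI A) (hBI : MapsToI B)
    (hAB : ∀ x : Pt n, inCube x → A x ≤ B x) :
    (ContinuousOn B (cubeSet n) →
      ∀ x : Pt n, inCube x → Pneg k (cubeSet n) A B x ≤ B x - A x) ∧
    (ContinuousOn A (cubeSet n) →
      ∀ x : Pt n, inCube x → Ppos k (cubeSet n) A B x ≤ B x - A x) := by
  constructor
  · intro hcont x hx
    unfold Pneg
    apply sInf_helper (by linarith [hAB x hx])
    intro ε hε hne
    obtain ⟨r₀, DU₀, hDU₀mem, hDU₀neg, hr₀⟩ := hne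
    obtain ⟨R₀, hR₀DU, hR₀v, hR₀sign⟩ := exists_box_neg hDU₀neg
    have hR₀K : R₀.IsKBox k := (hDU₀mem R₀ hR₀DU).1
    by_cases hz : ∃ j₀, x j₀ = 0
    · obtain ⟨j₀, hj₀⟩ := hz
      obtain ⟨R, hRK, hRv, hRfil, hRL⟩ := caseZ A B hB hAI x hx j₀ hj₀ R₀ hR₀K hR₀v ε hε
      have hRsign : R.sign k x = -1 := by
        have heq : R.sign k x = R₀.sign k x := by
          unfold Box.sign
          rw [hRfil]
        rw [heq, hR₀sign]
      have hmul : multDU k ({R} : Multiset (Box n)) x = -1 := by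
        rw [multDU_singleton, mult_vertex hRv, hRsign]
      refine ⟨Lk k A B ({R} : Multiset (Box n)) /
          |((multDU k ({R} : Multiset (Box n)) x : ℤ) : ℝ)|,
        ⟨{R}, memRk_singleton hRK, by rw [hmul]; norm_num, rfl⟩, ?_⟩
      have hA0 : A x = 0 := hA.1 x hx ⟨j₀, hj₀⟩
      have hB0 : B x = 0 := hB.1 x hx ⟨j₀, hj₀⟩
      rw [hmul, hA0, hB0]
      norm_num
      linarith [hRL]
    · push_neg at hz
      have hpos : ∀ i, 0 < x i := fun i => lt_of_le_of_ne (hx i).1 (Ne.symm (hz i))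
      by_cases hone : ∃ j, x j < 1
      · obtain ⟨j, hj⟩ := hone
        obtain ⟨R, hRK, hRv, hRsign, hRL⟩ :=
          caseMneg hk1 hkn A B hB hAI hcont x hx hpos j hj ε hε
        have hmul : multDU k ({R} : Multiset (Box n)) x = -1 := by
          rw [multDU_singleton, mult_vertex hRv, hRsign]
        refine ⟨Lk k A B ({R} : Multiset (Box n)) /
            |((multDU k ({R} : Multiset (Box n)) x : ℤ) : ℝ)|,
          ⟨{R}, memRk_singleton hRK, by rw [hmul]; norm_num, rfl⟩, ?_⟩
        rw [hmul]
        norm_num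
        linarith [hRL]
      · exfalso
        push_neg at hone
        have h1 : ∀ i, x i = 1 := fun i => le_antisymm (hx i).2 (hone i)
        have hs1 := sign_at_one k R₀ hR₀K x hR₀v h1
        rw [hR₀sign] at hs1
        omega
  · intro hcont x hx
    unfold Ppos
    apply sInf_helper (by linarith [hAB x hx])
    intro ε hε hne
    obtain ⟨r₀, DU₀, hDU₀mem, hDU₀pos, hr₀⟩ := hne
    obtain ⟨R₀, hR₀DU, hR₀v, hR₀sign⟩ := exists_box_pos hDU₀pos
    have hR₀K : R₀.IsKBox k := (hDU₀mem R₀ hR₀DU).1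
    by_cases hz : ∃ j₀, x j₀ = 0
    · obtain ⟨j₀, hj₀⟩ := hz
      obtain ⟨R, hRK, hRv, hRfil, hRL⟩ := caseZ A B hB hAI x hx j₀ hj₀ R₀ hR₀K hR₀v ε hε
      have hRsign : R.sign k x = 1 := by
        have heq : R.sign k x = R₀.sign k x := by
          unfold Box.sign
          rw [hRfil]
        rw [heq, hR₀sign]
      have hmul : multDU k ({R} : Multiset (Box n)) x = 1 := by
        rw [multDU_singleton, mult_vertex hRv, hRsign]
      refine ⟨Lk k A B ({R} : Multiset (Box n)) /
          |((multDU k ({R} : Multiset (Box n)) x : ℤ) : ℝ)|,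
        ⟨{R}, memRk_singleton hRK, by rw [hmul]; norm_num, rfl⟩, ?_⟩
      have hA0 : A x = 0 := hA.1 x hx ⟨j₀, hj₀⟩
      have hB0 : B x = 0 := hB.1 x hx ⟨j₀, hj₀⟩
      rw [hmul, hA0, hB0]
      norm_num
      linarith [hRL]
    · push_neg at hz
      have hpos : ∀ i, 0 < x i := fun i => lt_of_le_of_ne (hx i).1 (Ne.symm (hz i))
      obtain ⟨R, hRK, hRv, hRsign, hRL⟩ :=
        caseMpos hn hk1 hkn A B hB hAI hcont x hx hpos ε hε
      have hmul : multDU k ({R} : Multiset (Box n)) x = 1 := by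
        rw [multDU_singleton, mult_vertex hRv, hRsign]
      refine ⟨Lk k A B ({R} : Multiset (Box n)) /
          |((multDU k ({R} : Multiset (Box n)) x : ℤ) : ℝ)|,
        ⟨{R}, memRk_singleton hRK, by rw [hmul]; norm_num, rfl⟩, ?_⟩
      rw [hmul]
      norm_num
      linarith [hRL]
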